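/- Let k be a field, A a nonzero finite-dimensional commutative unital k-algebra, and L a nonzero finite-dimensional Lie algebra over k whose Killing form κ_L is nondegenerate. Then the Killing form of the expanded Lie algebra A ⊗[k] L is nondegenerate if and only if the trace form τ_A of A is nondegenerate. -/

import Mathlib

open scoped TensorProduct

/-- The expanded Lie algebra `A ⊗[k] L` is a Lie algebra over `k` (not just over `A`). -/
noncomputable instance expandedLieAlgebra (k A L : Type*) [Field k] [CommRing A] [Algebra k A]
    [LieRing L] [LieAlgebra k L] : LieAlgebra k (A ⊗[k] L) where
  lie_smul c x y := by
    rw [← algebraMap_smul A c y, lie_smul, algebraMap_smul]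

section Aux

variable (k A L : Type*) [Field k] [CommRing A] [Algebra k A]
    [LieRing L] [LieAlgebra k L]

lemma expanded_toEnd_tmul (a : A) (x : L) :
    LieModule.toEnd k (A ⊗[k] L) (A ⊗[k] L) (a ⊗ₜ[k] x) =
      TensorProduct.map (Algebra.lmul k A a) (LieModule.toEnd k L L x) := by
  apply TensorProduct.ext'
  intro b y
  simp only [LieModule.toEnd_apply_apply, TensorProduct.map_tmul, Algebra.lmul,
    AlgHom.coe_mk, LinearMap.mul_apply']
  rfl

lemma expanded_killing_tmul [FiniteDimensional k A] [FiniteDimensional k L]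
    (a b : A) (x y : L) :
    killingForm k (A ⊗[k] L) (a ⊗ₜ[k] x) (b ⊗ₜ[k] y) =
      Algebra.traceForm k A a b * killingForm k L x y := by
  rw [LieModule.traceForm_apply_apply, expanded_toEnd_tmul, expanded_toEnd_tmul,
    ← TensorProduct.map_comp, LinearMap.trace_tensorProduct',
    Algebra.traceForm_apply, Algebra.trace_apply, LieModule.traceForm_apply_apply]
  congr 1
  rw [map_mul, Module.End.mul_eq_comp]

end Aux

/-- If the Killing form of `L` is nondegenerate, then the Killing form of the expanded Lie
algebra `A ⊗[k] L` is nondegenerate if and only if the trace form of `A` is nondegenerate. -/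
theorem killingForm_expansion_nondegenerate_iff
    (k A L : Type*) [Field k] [CommRing A] [Algebra k A] [Nontrivial A] [FiniteDimensional k A]
    [LieRing L] [LieAlgebra k L] [Nontrivial L] [FiniteDimensional k L]
    (hL : LinearMap.BilinForm.Nondegenerate (killingForm k L)) :
    LinearMap.BilinForm.Nondegenerate (killingForm k (A ⊗[k] L)) ↔
      LinearMap.BilinForm.Nondegenerate (Algebra.traceForm k A) := by
  classical
  let bA := Module.finBasis k A
  let bL := Module.finBasis k L
  let bT := bA.tensorProduct bL
  have hmat : LinearMap.BilinForm.toMatrix bT (killingForm k (A ⊗[k] L)) =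
      Matrix.kroneckerMap (· * ·) (LinearMap.BilinForm.toMatrix bA (Algebra.traceForm k A))
        (LinearMap.BilinForm.toMatrix bL (killingForm k L)) := by
    ext ⟨i, j⟩ ⟨i', j'⟩
    simp only [BilinForm.toMatrix_apply, Matrix.kroneckerMap_apply, bT,
      Module.Basis.tensorProduct_apply']
    exact expanded_killing_tmul k A L _ _ _ _
  rw [LinearMap.BilinForm.nondegenerate_iff_det_ne_zero bT,
    LinearMap.BilinForm.nondegenerate_iff_det_ne_zero bA, hmat]
  rw [Matrix.det_kronecker]
  have hdetL : (LinearMap.BilinForm.toMatrix bL (killingForm k L)).det ≠ 0 :=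
    (LinearMap.BilinForm.nondegenerate_iff_det_ne_zero bL).mp hL
  have hA : Module.finrank k A ≠ 0 := Module.finrank_pos.ne'
  have hLn : Module.finrank k L ≠ 0 := Module.finrank_pos.ne'
  simp [mul_ne_zero_iff, pow_ne_zero_iff, hdetL, hA, hLn, Fintype.card_fin]
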